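/- Let f ∈ U_T. Then for every Δa > 0 and every Δt with 0 < Δt < T, ∫₀^{T−Δt} ∫₀^∞ ‖ f(a+Δa, t+Δt) − ∫₀¹ f(a+τ·Δa, t+τ·Δt) dτ ‖_{L^∞(Ω)} da dt ≤ (Δa + Δt)·‖f‖_{U_T}, where the inner integral in τ is a Bochner integral in L^∞(Ω). -/

import Mathlib

open MeasureTheory Filter ENNReal

/-- Lebesgue measure on `Ω = (0,1)`. -/
noncomputable def Om : Measure ℝ := volume.restrict (Set.Ioo 0 1)

/-- The Banach space `L^∞(Ω)`. -/
noncomputable abbrev Linf := Lp ℝ ⊤ Om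

/-- The Banach space `L¹(Ω)`. -/
noncomputable abbrev Lone := Lp ℝ 1 Om

/-- The duality pairing `⟨u,v⟩ = ∫_Ω u v dx` between `L^∞(Ω)` and `L¹(Ω)`. -/
noncomputable def pair (u : Linf) (v : Lone) : ℝ := ∫ x, (u : ℝ → ℝ) x * (v : ℝ → ℝ) x ∂Om

/-- The `Y_T` norm `∫₀^T ∫₀^∞ ‖f(a,t)‖_{L^∞(Ω)} da dt` (as extended real). -/
noncomputable def YT (T : ℝ) (f : ℝ → ℝ → Linf) : ℝ≥0∞ :=
  ∫⁻ t in Set.Ioo (0:ℝ) T, ∫⁻ a in Set.Ioi (0:ℝ), (‖f a t‖₊ : ℝ≥0∞)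

/-- Difference quotient in age: `D^σ_a f(a,t) = (f(a+σ,t) − f(a,t))/σ`. -/
noncomputable def Da (σ : ℝ) (f : ℝ → ℝ → Linf) : ℝ → ℝ → Linf :=
  fun a t => σ⁻¹ • (f (a + σ) t - f a t)

/-- Difference quotient in time: `D^σ_t f(a,t) = (f(a,t+σ) − f(a,t))/σ`. -/
noncomputable def Dt (σ : ℝ) (f : ℝ → ℝ → Linf) : ℝ → ℝ → Linf :=
  fun a t => σ⁻¹ • (f a (t + σ) - f a t)

/-- The `U_T = BV(ℝ₊×(0,T); L^∞(Ω))` norm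
`‖f‖_{U_T} = ‖f‖_{Y_T} + limsup_{σ→0⁺} (‖D^σ_a f‖_{Y_T} + ‖D^σ_t f‖_{Y_{T−σ}})`. -/
noncomputable def UTnorm (T : ℝ) (f : ℝ → ℝ → Linf) : ℝ≥0∞ :=
  YT T f + Filter.limsup (fun σ => YT T (Da σ f) + YT (T - σ) (Dt σ f))
    (nhdsWithin 0 (Set.Ioi 0))

open Set

namespace Stmt6Aux

/-- A measurable equivalence `(t,a) ↦ (a+c, t+d)`. -/
noncomputable def swapTrans (c d : ℝ) : ℝ × ℝ ≃ᵐ ℝ × ℝ where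
  toFun p := (p.2 + c, p.1 + d)
  invFun q := (q.2 - d, q.1 - c)
  left_inv p := by simp
  right_inv q := by simp
  measurable_toFun := (measurable_snd.add_const c).prodMk (measurable_fst.add_const d)
  measurable_invFun := (measurable_snd.sub_const d).prodMk (measurable_fst.sub_const c)

/-- A measurable equivalence `(a,t) ↦ (a+c, t+d)`. -/
noncomputable def prodTrans (c d : ℝ) : ℝ × ℝ ≃ᵐ ℝ × ℝ where
  toFun p := (p.1 + c, p.2 + d)
  invFun q := (q.1 - c, q.2 - d)
  left_inv p := by simp
  right_inv q := by simp
  measurable_toFun := (measurable_fst.add_const c).prodMk (measurable_snd.add_const d)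
  measurable_invFun := (measurable_fst.sub_const c).prodMk (measurable_snd.sub_const d)

lemma map_addRight_restrict_le (A A' : Set ℝ) (hA : MeasurableSet A) (c : ℝ)
    (h : ∀ x ∈ A, x + c ∈ A') :
    Measure.map (· + c) (volume.restrict A) ≤ volume.restrict A' := by
  refine Measure.le_iff.2 fun s hs => ?_
  rw [Measure.map_apply (measurable_add_const c) hs,
    Measure.restrict_apply' hA, Measure.restrict_apply hs]
  calc volume ((· + c) ⁻¹' s ∩ A)
      ≤ volume ((· + c) ⁻¹' s ∩ (· + c) ⁻¹' A') := by
        exact measure_mono (inter_subset_inter_right _ fun x hx => h x hx)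
    _ = volume ((· + c) ⁻¹' (s ∩ A')) := by rw [preimage_inter]
    _ = volume (s ∩ A') := by rw [measure_preimage_add_right]

lemma prod_mono' {μ μ' ν ν' : Measure ℝ} [SFinite ν] [SFinite ν']
    (h1 : μ ≤ μ') (h2 : ν ≤ ν') : μ.prod ν ≤ μ'.prod ν' := by
  refine Measure.le_iff.2 fun s hs => ?_
  rw [Measure.prod_apply hs, Measure.prod_apply hs]
  exact lintegral_mono' h1 fun x => Measure.le_iff'.1 h2 _

lemma map_swapTrans_le (A B A' B' : Set ℝ) (hA : MeasurableSet A) (hB : MeasurableSet B)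
    (c d : ℝ) (hc : ∀ x ∈ B, x + c ∈ B') (hd : ∀ x ∈ A, x + d ∈ A') :
    Measure.map (swapTrans c d) ((volume.restrict A).prod (volume.restrict B)) ≤
      (volume.restrict B').prod (volume.restrict A') := by
  have : (swapTrans c d : ℝ × ℝ → ℝ × ℝ) = (Prod.map (· + c) (· + d)) ∘ Prod.swap := rfl
  rw [this, ← Measure.map_map (by measurability) measurable_swap, Measure.prod_swap,
    ← Measure.map_prod_map _ _ (measurable_add_const c) (measurable_add_const d)]
  exact prod_mono' (map_addRight_restrict_le _ _ hB c hc) (map_addRight_restrict_le _ _ hA d hd)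

lemma map_prodTrans_le (A B A' B' : Set ℝ) (hA : MeasurableSet A) (hB : MeasurableSet B)
    (c d : ℝ) (hc : ∀ x ∈ A, x + c ∈ A') (hd : ∀ x ∈ B, x + d ∈ B') :
    Measure.map (prodTrans c d) ((volume.restrict A).prod (volume.restrict B)) ≤
      (volume.restrict A').prod (volume.restrict B') := by
  have : (prodTrans c d : ℝ × ℝ → ℝ × ℝ) = Prod.map (· + c) (· + d) := rfl
  rw [this, ← Measure.map_prod_map _ _ (measurable_add_const c) (measurable_add_const d)]
  exact prod_mono' (map_addRight_restrict_le _ _ hA c hc) (map_addRight_restrict_le _ _ hB d hd)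

section F
variable (T : ℝ) (f : ℝ → ℝ → Linf)

/-- `f (a+c) (t+d)` is a.e. strongly measurable on any product box mapped into the base box. -/
lemma aesm_straight
    (hfmeas : AEStronglyMeasurable (fun p : ℝ × ℝ => f p.1 p.2)
      ((volume.restrict (Set.Ioi (0:ℝ))).prod (volume.restrict (Set.Ioo (0:ℝ) T))))
    (A B : Set ℝ) (hA : MeasurableSet A) (hB : MeasurableSet B) (c d : ℝ)
    (hc : ∀ x ∈ A, x + c ∈ Ioi (0:ℝ)) (hd : ∀ x ∈ B, x + d ∈ Ioo (0:ℝ) T) :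
    AEStronglyMeasurable (fun p : ℝ × ℝ => f (p.1 + c) (p.2 + d))
      ((volume.restrict A).prod (volume.restrict B)) := by
  have qmp : Measure.QuasiMeasurePreserving (prodTrans c d)
      ((volume.restrict A).prod (volume.restrict B))
      ((volume.restrict (Set.Ioi (0:ℝ))).prod (volume.restrict (Set.Ioo (0:ℝ) T))) :=
    ⟨(prodTrans c d).measurable,
      (map_prodTrans_le A B _ _ hA hB c d hc hd).absolutelyContinuous⟩
  exact hfmeas.comp_quasiMeasurePreserving qmp

/-- `f (p.2+c) (p.1+d)` is a.e. strongly measurable on swapped boxes. -/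
lemma aesm_swap
    (hfmeas : AEStronglyMeasurable (fun p : ℝ × ℝ => f p.1 p.2)
      ((volume.restrict (Set.Ioi (0:ℝ))).prod (volume.restrict (Set.Ioo (0:ℝ) T))))
    (A B : Set ℝ) (hA : MeasurableSet A) (hB : MeasurableSet B) (c d : ℝ)
    (hc : ∀ x ∈ B, x + c ∈ Ioi (0:ℝ)) (hd : ∀ x ∈ A, x + d ∈ Ioo (0:ℝ) T) :
    AEStronglyMeasurable (fun p : ℝ × ℝ => f (p.2 + c) (p.1 + d))
      ((volume.restrict A).prod (volume.restrict B)) := by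
  have qmp : Measure.QuasiMeasurePreserving (swapTrans c d)
      ((volume.restrict A).prod (volume.restrict B))
      ((volume.restrict (Set.Ioi (0:ℝ))).prod (volume.restrict (Set.Ioo (0:ℝ) T))) :=
    ⟨(swapTrans c d).measurable,
      (map_swapTrans_le A B _ _ hA hB c d hc hd).absolutelyContinuous⟩
  exact hfmeas.comp_quasiMeasurePreserving qmp

end F

end Stmt6Aux

namespace Stmt6Aux

section Shift
variable (T Δt : ℝ) (f : ℝ → ℝ → Linf)

lemma lint_swap_le (T'' : ℝ) (g : ℝ → ℝ → Linf) (T' : ℝ)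
    (hg : AEMeasurable (fun q : ℝ × ℝ => (‖g q.1 q.2‖₊ : ℝ≥0∞))
      ((volume.restrict (Ioi (0:ℝ))).prod (volume.restrict (Ioo (0:ℝ) T'))))
    (c d : ℝ) (hc : 0 ≤ c) (hd0 : 0 ≤ d) (hd1 : T'' + d ≤ T') :
    ∫⁻ p, (‖g (p.2 + c) (p.1 + d)‖₊ : ℝ≥0∞)
      ∂((volume.restrict (Ioo (0:ℝ) T'')).prod (volume.restrict (Ioi (0:ℝ)))) ≤ YT T' g := by
  set μ1 := (volume.restrict (Ioo (0:ℝ) T'')).prod (volume.restrict (Ioi (0:ℝ))) with hμ1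
  set μ2 := (volume.restrict (Ioi (0:ℝ))).prod (volume.restrict (Ioo (0:ℝ) T')) with hμ2
  have e1 : ∫⁻ p, (‖g (p.2 + c) (p.1 + d)‖₊ : ℝ≥0∞) ∂μ1
      = ∫⁻ q, (‖g q.1 q.2‖₊ : ℝ≥0∞) ∂(Measure.map (swapTrans c d) μ1) :=
    ((swapTrans c d).measurableEmbedding.lintegral_map (fun q => (‖g q.1 q.2‖₊ : ℝ≥0∞))).symm
  have e2 : Measure.map (swapTrans c d) μ1 ≤ μ2 := by
    refine map_swapTrans_le _ _ _ _ measurableSet_Ioo measurableSet_Ioi c d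
      (fun x hx => add_pos_of_pos_of_nonneg hx hc) (fun x hx => ?_)
    exact ⟨add_pos_of_pos_of_nonneg hx.1 hd0, by linarith [hx.2]⟩
  have e3 : ∫⁻ q, (‖g q.1 q.2‖₊ : ℝ≥0∞) ∂μ2 = YT T' g := by
    rw [YT]; exact lintegral_prod_symm _ hg
  rw [e1, ← e3]
  exact lintegral_mono' e2 le_rfl

lemma aem_Da (σ : ℝ) (hσ : 0 ≤ σ)
    (hfmeas : AEStronglyMeasurable (fun p : ℝ × ℝ => f p.1 p.2)
      ((volume.restrict (Set.Ioi (0:ℝ))).prod (volume.restrict (Set.Ioo (0:ℝ) T)))) :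
    AEMeasurable (fun q : ℝ × ℝ => (‖Da σ f q.1 q.2‖₊ : ℝ≥0∞))
      ((volume.restrict (Ioi (0:ℝ))).prod (volume.restrict (Ioo (0:ℝ) T))) := by
  have h1 := aesm_straight T f hfmeas (Ioi 0) (Ioo 0 T) measurableSet_Ioi measurableSet_Ioo σ 0
    (fun x hx => add_pos_of_pos_of_nonneg hx hσ) (fun x hx => by simpa using hx)
  simp only [add_zero] at h1
  simp only [Da]
  exact ((h1.sub hfmeas).const_smul σ⁻¹).enorm

lemma aem_Dt (σ : ℝ) (hσ : 0 ≤ σ)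
    (hfmeas : AEStronglyMeasurable (fun p : ℝ × ℝ => f p.1 p.2)
      ((volume.restrict (Set.Ioi (0:ℝ))).prod (volume.restrict (Set.Ioo (0:ℝ) T)))) :
    AEMeasurable (fun q : ℝ × ℝ => (‖Dt σ f q.1 q.2‖₊ : ℝ≥0∞))
      ((volume.restrict (Ioi (0:ℝ))).prod (volume.restrict (Ioo (0:ℝ) (T - σ)))) := by
  have h1 := aesm_straight T f hfmeas (Ioi 0) (Ioo 0 (T - σ)) measurableSet_Ioi measurableSet_Ioo 0 σ
    (fun x hx => by simpa using hx)
    (fun x hx => ⟨add_pos_of_pos_of_nonneg hx.1 hσ, by linarith [hx.2]⟩)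
  have h0 := aesm_straight T f hfmeas (Ioi 0) (Ioo 0 (T - σ)) measurableSet_Ioi measurableSet_Ioo 0 0
    (fun x hx => by simpa using hx)
    (fun x hx => by simp only [add_zero]; exact ⟨hx.1, by linarith [hx.2]⟩)
  simp only [add_zero] at h1 h0
  simp only [Dt]
  exact ((h1.sub h0).const_smul σ⁻¹).enorm

end Shift

end Stmt6Aux

namespace Stmt6Aux

lemma shiftA (T Δt : ℝ) (f : ℝ → ℝ → Linf)
    (hfmeas : AEStronglyMeasurable (fun p : ℝ × ℝ => f p.1 p.2)
      ((volume.restrict (Set.Ioi (0:ℝ))).prod (volume.restrict (Set.Ioo (0:ℝ) T))))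
    (L : ℝ≥0∞) (δ : ℝ) (hδ : 0 < δ)
    (hL : ∀ σ ∈ Ioo (0:ℝ) δ, YT T (Da σ f) ≤ L)
    (c h d : ℝ) (hc : 0 ≤ c) (hh : 0 ≤ h) (hd0 : 0 ≤ d) (hdT : T - Δt + d ≤ T) :
    ∫⁻ p, (‖f (p.2 + c + h) (p.1 + d) - f (p.2 + c) (p.1 + d)‖₊ : ℝ≥0∞)
      ∂((volume.restrict (Ioo (0:ℝ) (T - Δt))).prod (volume.restrict (Ioi (0:ℝ))))
      ≤ ENNReal.ofReal h * L := by
  set ν := (volume.restrict (Ioo (0:ℝ) (T - Δt))).prod (volume.restrict (Ioi (0:ℝ))) with hν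
  rcases hh.eq_or_lt with h0 | hpos
  · simp only [← h0, add_zero, sub_self, nnnorm_zero, ENNReal.coe_zero, lintegral_zero,
      ENNReal.ofReal_zero, zero_mul, le_refl]
  obtain ⟨n, hn⟩ := exists_nat_gt (h / δ)
  have hnpos : 0 < (n:ℝ) := lt_trans (div_pos hpos hδ) hn
  set σ := h / n with hσdef
  have hσpos : 0 < σ := div_pos hpos hnpos
  have hnσ : (n:ℝ) * σ = h := by rw [hσdef]; field_simp
  have hσδ : σ < δ := by
    rw [hσdef, div_lt_iff₀ hnpos]
    calc h = (h / δ) * δ := by field_simp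
    _ < n * δ := by exact mul_lt_mul_of_pos_right hn hδ
    _ = δ * n := by ring
  -- measurability of each summand
  have haesm : ∀ e : ℝ, 0 ≤ e →
      AEMeasurable (fun p : ℝ × ℝ =>
        (‖σ • Da σ f (p.2 + e) (p.1 + d)‖₊ : ℝ≥0∞)) ν := by
    intro e he
    have h1 := aesm_swap T f hfmeas (Ioo 0 (T - Δt)) (Ioi 0) measurableSet_Ioo measurableSet_Ioi
      (e + σ) d (fun x hx => add_pos_of_pos_of_nonneg hx (by positivity : (0:ℝ) ≤ e + σ))
      (fun x hx => ⟨add_pos_of_pos_of_nonneg hx.1 hd0, by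
        have := hx.2; linarith⟩)
    have h2 := aesm_swap T f hfmeas (Ioo 0 (T - Δt)) (Ioi 0) measurableSet_Ioo measurableSet_Ioi
      e d (fun x hx => add_pos_of_pos_of_nonneg hx he)
      (fun x hx => ⟨add_pos_of_pos_of_nonneg hx.1 hd0, by
        have := hx.2; linarith⟩)
    simp only [← add_assoc] at h1
    simp only [Da]
    exact (((h1.sub h2).const_smul σ⁻¹).const_smul σ).enorm
  -- pointwise telescoping
  have key : ∀ p : ℝ × ℝ,
      f (p.2 + c + h) (p.1 + d) - f (p.2 + c) (p.1 + d)
        = ∑ j ∈ Finset.range n, σ • Da σ f (p.2 + (c + j * σ)) (p.1 + d) := by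
    intro p
    have term : ∀ j : ℕ, σ • Da σ f (p.2 + (c + j * σ)) (p.1 + d)
        = (fun j : ℕ => f (p.2 + (c + j * σ)) (p.1 + d)) (j + 1)
          - (fun j : ℕ => f (p.2 + (c + j * σ)) (p.1 + d)) j := by
      intro j
      simp only [Da, smul_smul, mul_inv_cancel₀ hσpos.ne', one_smul]
      congr 2
      push_cast; ring
    rw [Finset.sum_congr rfl fun j _ => term j,
      Finset.sum_range_sub (fun j : ℕ => f (p.2 + (c + j * σ)) (p.1 + d)) n]
    have e1 : p.2 + (c + (n : ℝ) * σ) = p.2 + c + h := by rw [hnσ]; ring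
    have e2 : p.2 + (c + ((0:ℕ) : ℝ) * σ) = p.2 + c := by push_cast; ring
    rw [e1, e2]
  calc ∫⁻ p, (‖f (p.2 + c + h) (p.1 + d) - f (p.2 + c) (p.1 + d)‖₊ : ℝ≥0∞) ∂ν
      = ∫⁻ p, (‖∑ j ∈ Finset.range n, σ • Da σ f (p.2 + (c + j * σ)) (p.1 + d)‖₊ : ℝ≥0∞) ∂ν := by
        exact lintegral_congr fun p => by rw [key p]
    _ ≤ ∫⁻ p, ∑ j ∈ Finset.range n,
          (‖σ • Da σ f (p.2 + (c + j * σ)) (p.1 + d)‖₊ : ℝ≥0∞) ∂ν := by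
        refine lintegral_mono fun p => ?_
        rw [← ENNReal.coe_finset_sum]
        exact ENNReal.coe_le_coe.2 (nnnorm_sum_le _ _)
    _ = ∑ j ∈ Finset.range n, ∫⁻ p,
          (‖σ • Da σ f (p.2 + (c + j * σ)) (p.1 + d)‖₊ : ℝ≥0∞) ∂ν := by
        exact lintegral_finset_sum' _ fun j _ => haesm (c + j * σ) (by positivity)
    _ ≤ ∑ j ∈ Finset.range n, ENNReal.ofReal σ * L := by
        refine Finset.sum_le_sum fun j _ => ?_
        have ptw : ∀ p : ℝ × ℝ, (‖σ • Da σ f (p.2 + (c + j * σ)) (p.1 + d)‖₊ : ℝ≥0∞)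
            = ENNReal.ofReal σ * (‖Da σ f (p.2 + (c + j * σ)) (p.1 + d)‖₊ : ℝ≥0∞) := by
          intro p
          rw [nnnorm_smul, ENNReal.coe_mul, ← enorm_eq_nnnorm σ, Real.enorm_eq_ofReal hσpos.le]
        calc ∫⁻ p, (‖σ • Da σ f (p.2 + (c + j * σ)) (p.1 + d)‖₊ : ℝ≥0∞) ∂ν
            = ∫⁻ p, ENNReal.ofReal σ * (‖Da σ f (p.2 + (c + j * σ)) (p.1 + d)‖₊ : ℝ≥0∞) ∂ν := by
              exact lintegral_congr fun p => by rw [ptw p]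
          _ = ENNReal.ofReal σ * ∫⁻ p, (‖Da σ f (p.2 + (c + j * σ)) (p.1 + d)‖₊ : ℝ≥0∞) ∂ν :=
              lintegral_const_mul' _ _ ofReal_ne_top
          _ ≤ ENNReal.ofReal σ * YT T (Da σ f) := by
              refine mul_le_mul_right ?_ _
              exact lint_swap_le (T - Δt) (Da σ f) T (aem_Da T f σ hσpos.le hfmeas)
                (c + j * σ) d (by positivity) hd0 hdT
          _ ≤ ENNReal.ofReal σ * L := mul_le_mul_right (hL σ ⟨hσpos, hσδ⟩) _
    _ = ENNReal.ofReal h * L := by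
        rw [Finset.sum_const, Finset.card_range, nsmul_eq_mul, ← mul_assoc,
          ← ENNReal.ofReal_natCast n, ← ENNReal.ofReal_mul (by positivity), hnσ]

end Stmt6Aux

namespace Stmt6Aux

lemma shiftT (T Δt : ℝ) (f : ℝ → ℝ → Linf)
    (hfmeas : AEStronglyMeasurable (fun p : ℝ × ℝ => f p.1 p.2)
      ((volume.restrict (Set.Ioi (0:ℝ))).prod (volume.restrict (Set.Ioo (0:ℝ) T))))
    (L : ℝ≥0∞) (δ : ℝ) (hδ : 0 < δ)
    (hL : ∀ σ ∈ Ioo (0:ℝ) δ, YT (T - σ) (Dt σ f) ≤ L)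
    (c r k : ℝ) (hc : 0 ≤ c) (hr : 0 ≤ r) (hk : 0 ≤ k) (hrk : T - Δt + (r + k) ≤ T) :
    ∫⁻ p, (‖f (p.2 + c) (p.1 + (r + k)) - f (p.2 + c) (p.1 + r)‖₊ : ℝ≥0∞)
      ∂((volume.restrict (Ioo (0:ℝ) (T - Δt))).prod (volume.restrict (Ioi (0:ℝ))))
      ≤ ENNReal.ofReal k * L := by
  set ν := (volume.restrict (Ioo (0:ℝ) (T - Δt))).prod (volume.restrict (Ioi (0:ℝ))) with hν
  rcases hk.eq_or_lt with h0 | hpos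
  · simp only [← h0, add_zero, sub_self, nnnorm_zero, ENNReal.coe_zero, lintegral_zero,
      ENNReal.ofReal_zero, zero_mul, le_refl]
  obtain ⟨n, hn⟩ := exists_nat_gt (k / δ)
  have hnpos : 0 < (n:ℝ) := lt_trans (div_pos hpos hδ) hn
  set σ := k / n with hσdef
  have hσpos : 0 < σ := div_pos hpos hnpos
  have hnσ : (n:ℝ) * σ = k := by rw [hσdef]; field_simp
  have hσδ : σ < δ := by
    rw [hσdef, div_lt_iff₀ hnpos]
    calc k = (k / δ) * δ := by field_simp
    _ < n * δ := by exact mul_lt_mul_of_pos_right hn hδ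
    _ = δ * n := by ring
  -- measurability of each summand
  have haesm : ∀ e : ℝ, 0 ≤ e → T - Δt + (e + σ) ≤ T →
      AEMeasurable (fun p : ℝ × ℝ =>
        (‖σ • Dt σ f (p.2 + c) (p.1 + e)‖₊ : ℝ≥0∞)) ν := by
    intro e he heT
    have h1 := aesm_swap T f hfmeas (Ioo 0 (T - Δt)) (Ioi 0) measurableSet_Ioo measurableSet_Ioi
      c (e + σ) (fun x hx => add_pos_of_pos_of_nonneg hx hc)
      (fun x hx => ⟨add_pos_of_pos_of_nonneg hx.1 (by positivity), by
        have := hx.2; linarith⟩)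
    have h2 := aesm_swap T f hfmeas (Ioo 0 (T - Δt)) (Ioi 0) measurableSet_Ioo measurableSet_Ioi
      c e (fun x hx => add_pos_of_pos_of_nonneg hx hc)
      (fun x hx => ⟨add_pos_of_pos_of_nonneg hx.1 he, by
        have := hx.2; linarith [hσpos]⟩)
    simp only [← add_assoc] at h1
    simp only [Dt]
    exact (((h1.sub h2).const_smul σ⁻¹).const_smul σ).enorm
  -- pointwise telescoping
  have key : ∀ p : ℝ × ℝ,
      f (p.2 + c) (p.1 + (r + k)) - f (p.2 + c) (p.1 + r)
        = ∑ j ∈ Finset.range n, σ • Dt σ f (p.2 + c) (p.1 + (r + j * σ)) := by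
    intro p
    have term : ∀ j : ℕ, σ • Dt σ f (p.2 + c) (p.1 + (r + j * σ))
        = (fun j : ℕ => f (p.2 + c) (p.1 + (r + j * σ))) (j + 1)
          - (fun j : ℕ => f (p.2 + c) (p.1 + (r + j * σ))) j := by
      intro j
      simp only [Dt, smul_smul, mul_inv_cancel₀ hσpos.ne', one_smul]
      congr 2
      push_cast; ring
    rw [Finset.sum_congr rfl fun j _ => term j,
      Finset.sum_range_sub (fun j : ℕ => f (p.2 + c) (p.1 + (r + j * σ))) n]
    have e1 : p.1 + (r + (n : ℝ) * σ) = p.1 + (r + k) := by rw [hnσ]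
    have e2 : p.1 + (r + ((0:ℕ) : ℝ) * σ) = p.1 + r := by push_cast; ring
    rw [e1, e2]
  have hjk : ∀ j : ℕ, j ∈ Finset.range n → (j:ℝ) * σ + σ ≤ k := by
    intro j hj
    have : (j:ℝ) + 1 ≤ n := by exact_mod_cast Nat.succ_le_of_lt (Finset.mem_range.1 hj)
    calc (j:ℝ) * σ + σ = ((j:ℝ) + 1) * σ := by ring
      _ ≤ (n:ℝ) * σ := mul_le_mul_of_nonneg_right this hσpos.le
      _ = k := hnσ
  calc ∫⁻ p, (‖f (p.2 + c) (p.1 + (r + k)) - f (p.2 + c) (p.1 + r)‖₊ : ℝ≥0∞) ∂ν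
      = ∫⁻ p, (‖∑ j ∈ Finset.range n, σ • Dt σ f (p.2 + c) (p.1 + (r + j * σ))‖₊ : ℝ≥0∞) ∂ν := by
        exact lintegral_congr fun p => by rw [key p]
    _ ≤ ∫⁻ p, ∑ j ∈ Finset.range n,
          (‖σ • Dt σ f (p.2 + c) (p.1 + (r + j * σ))‖₊ : ℝ≥0∞) ∂ν := by
        refine lintegral_mono fun p => ?_
        rw [← ENNReal.coe_finset_sum]
        exact ENNReal.coe_le_coe.2 (nnnorm_sum_le _ _)
    _ = ∑ j ∈ Finset.range n, ∫⁻ p,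
          (‖σ • Dt σ f (p.2 + c) (p.1 + (r + j * σ))‖₊ : ℝ≥0∞) ∂ν := by
        refine lintegral_finset_sum' _ fun j hj => haesm (r + j * σ) (by positivity) ?_
        have := hjk j hj; linarith
    _ ≤ ∑ j ∈ Finset.range n, ENNReal.ofReal σ * L := by
        refine Finset.sum_le_sum fun j hj => ?_
        have ptw : ∀ p : ℝ × ℝ, (‖σ • Dt σ f (p.2 + c) (p.1 + (r + j * σ))‖₊ : ℝ≥0∞)
            = ENNReal.ofReal σ * (‖Dt σ f (p.2 + c) (p.1 + (r + j * σ))‖₊ : ℝ≥0∞) := by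
          intro p
          rw [nnnorm_smul, ENNReal.coe_mul, ← enorm_eq_nnnorm σ, Real.enorm_eq_ofReal hσpos.le]
        calc ∫⁻ p, (‖σ • Dt σ f (p.2 + c) (p.1 + (r + j * σ))‖₊ : ℝ≥0∞) ∂ν
            = ∫⁻ p, ENNReal.ofReal σ * (‖Dt σ f (p.2 + c) (p.1 + (r + j * σ))‖₊ : ℝ≥0∞) ∂ν := by
              exact lintegral_congr fun p => by rw [ptw p]
          _ = ENNReal.ofReal σ * ∫⁻ p, (‖Dt σ f (p.2 + c) (p.1 + (r + j * σ))‖₊ : ℝ≥0∞) ∂ν :=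
              lintegral_const_mul' _ _ ofReal_ne_top
          _ ≤ ENNReal.ofReal σ * YT (T - σ) (Dt σ f) := by
              refine mul_le_mul_right ?_ _
              refine lint_swap_le (T - Δt) (Dt σ f) (T - σ) (aem_Dt T f σ hσpos.le hfmeas)
                c (r + j * σ) hc (by positivity) ?_
              have := hjk j hj; linarith
          _ ≤ ENNReal.ofReal σ * L := mul_le_mul_right (hL σ ⟨hσpos, hσδ⟩) _
    _ = ENNReal.ofReal k * L := by
        rw [Finset.sum_const, Finset.card_range, nsmul_eq_mul, ← mul_assoc,
          ← ENNReal.ofReal_natCast n, ← ENNReal.ofReal_mul (by positivity), hnσ]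

end Stmt6Aux

namespace Stmt6Aux

lemma aem_lintegral_right {α β : Type*} [MeasurableSpace α] [MeasurableSpace β]
    {μ : Measure α} {ν' : Measure β} [SFinite ν'] {g : α × β → ℝ≥0∞}
    (hg : AEMeasurable g (μ.prod ν')) :
    AEMeasurable (fun x => ∫⁻ y, g (x, y) ∂ν') μ := by
  refine ⟨fun x => ∫⁻ y, hg.mk g (x, y) ∂ν', hg.measurable_mk.lintegral_prod_right', ?_⟩
  filter_upwards [Measure.ae_ae_of_ae_prod hg.ae_eq_mk] with x hx
  exact lintegral_congr_ae hx

end Stmt6Aux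

open Stmt6Aux in
theorem stmt6'
    (T : ℝ) (hT : 0 < T) (f : ℝ → ℝ → Linf)
    (hfmeas : AEStronglyMeasurable (fun p : ℝ × ℝ => f p.1 p.2)
      ((volume.restrict (Set.Ioi (0:ℝ))).prod (volume.restrict (Set.Ioo (0:ℝ) T))))
    (hYf : YT T f ≠ ⊤)
    (V : ℝ≥0∞)
    (hVdef : V = Filter.limsup (fun σ => YT T (Da σ f) + YT (T - σ) (Dt σ f))
      (nhdsWithin 0 (Set.Ioi 0)))
    (hVne : V ≠ ⊤)
    (Δa Δt : ℝ) (hΔa : 0 < Δa) (hΔt : 0 < Δt) (hΔtT : Δt < T) :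
    (∫⁻ t in Set.Ioo (0:ℝ) (T - Δt), ∫⁻ a in Set.Ioi (0:ℝ),
        (‖f (a + Δa) (t + Δt) - ∫ τ in (0:ℝ)..1, f (a + τ * Δa) (t + τ * Δt)‖₊ : ℝ≥0∞))
      ≤ ENNReal.ofReal (Δa + Δt) * V := by
  set μt' := volume.restrict (Set.Ioo (0:ℝ) (T - Δt)) with hμt'
  set μA := volume.restrict (Set.Ioi (0:ℝ)) with hμA
  set ν := μt'.prod μA with hνdef
  set ν2 := μA.prod (volume.restrict (Set.Ioo (0:ℝ) T)) with hν2def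
  set μτ := volume.restrict (Set.Ioc (0:ℝ) 1) with hμτdef
  have hμτuniv : μτ Set.univ = 1 := by
    rw [hμτdef, Measure.restrict_apply_univ, Real.volume_Ioc]
    simp
  -- the 3-variable map and its measure bound
  set Φ : ℝ × (ℝ × ℝ) → ℝ × ℝ := fun q => (q.2.2 + q.1 * Δa, q.2.1 + q.1 * Δt) with hΦdef
  have hΦmeas : Measurable Φ := by
    exact (measurable_snd.snd.add (measurable_fst.mul_const Δa)).prodMk
      (measurable_snd.fst.add (measurable_fst.mul_const Δt))
  have hmap : Measure.map Φ (μτ.prod ν) ≤ ν2 := by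
    refine Measure.le_iff.2 fun s hs => ?_
    rw [Measure.map_apply hΦmeas hs, Measure.prod_apply (hΦmeas hs)]
    have hsec : ∀ τ ∈ Set.Ioc (0:ℝ) 1, ν (Prod.mk τ ⁻¹' (Φ ⁻¹' s)) ≤ ν2 s := by
      intro τ hτ
      have hpre : Prod.mk τ ⁻¹' (Φ ⁻¹' s) = (swapTrans (τ * Δa) (τ * Δt)) ⁻¹' s := rfl
      rw [hpre, ← Measure.map_apply (swapTrans (τ * Δa) (τ * Δt)).measurable hs]
      refine Measure.le_iff.1 ?_ s hs
      refine map_swapTrans_le _ _ _ _ measurableSet_Ioo measurableSet_Ioi _ _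
        (fun x hx => add_pos_of_pos_of_nonneg hx (mul_nonneg hτ.1.le hΔa.le))
        (fun x hx => ⟨add_pos_of_pos_of_nonneg hx.1 (mul_nonneg hτ.1.le hΔt.le), ?_⟩)
      have h1 : τ * Δt ≤ Δt := by nlinarith [hτ.2, hΔt.le]
      have := hx.2; linarith
    calc ∫⁻ τ, ν (Prod.mk τ ⁻¹' (Φ ⁻¹' s)) ∂μτ
        ≤ ∫⁻ _, ν2 s ∂μτ := by
          refine lintegral_mono_ae ?_
          rw [hμτdef]
          filter_upwards [ae_restrict_mem measurableSet_Ioc] with τ hτ using hsec τ hτ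
      _ = ν2 s := by rw [lintegral_const, hμτuniv, mul_one]
  have hqmpΦ : Measure.QuasiMeasurePreserving Φ (μτ.prod ν) ν2 :=
    ⟨hΦmeas, hmap.absolutelyContinuous⟩
  have hGswap : AEStronglyMeasurable
      (fun q : ℝ × (ℝ × ℝ) => f (q.2.2 + q.1 * Δa) (q.2.1 + q.1 * Δt)) (μτ.prod ν) :=
    hfmeas.comp_quasiMeasurePreserving hqmpΦ
  have hG : AEStronglyMeasurable
      (fun q : (ℝ × ℝ) × ℝ => f (q.1.2 + q.2 * Δa) (q.1.1 + q.2 * Δt)) (ν.prod μτ) :=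
    hGswap.comp_quasiMeasurePreserving
      (Measure.measurePreserving_swap).quasiMeasurePreserving
  have hXν : AEStronglyMeasurable (fun p : ℝ × ℝ => f (p.2 + Δa) (p.1 + Δt)) ν := by
    refine aesm_swap T f hfmeas _ _ measurableSet_Ioo measurableSet_Ioi Δa Δt
      (fun x hx => add_pos_of_pos_of_nonneg hx hΔa.le) (fun x hx => ?_)
    exact ⟨add_pos_of_pos_of_nonneg hx.1 hΔt.le, by have := hx.2; linarith⟩
  have hqmpfst : Measure.QuasiMeasurePreserving (Prod.fst : (ℝ × ℝ) × ℝ → ℝ × ℝ)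
      (ν.prod μτ) ν := by
    refine ⟨measurable_fst, ?_⟩
    rw [Measure.map_fst_prod, hμτuniv, one_smul]
  have hX : AEStronglyMeasurable
      (fun q : (ℝ × ℝ) × ℝ => f (q.1.2 + Δa) (q.1.1 + Δt)) (ν.prod μτ) :=
    hXν.comp_quasiMeasurePreserving hqmpfst
  have hH : AEMeasurable (fun q : (ℝ × ℝ) × ℝ =>
      (‖f (q.1.2 + Δa) (q.1.1 + Δt) - f (q.1.2 + q.2 * Δa) (q.1.1 + q.2 * Δt)‖₊ : ℝ≥0∞))
      (ν.prod μτ) := (hX.sub hG).enorm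
  -- finiteness of the triple norm integral
  have hGint : ∫⁻ q, (‖f (q.1.2 + q.2 * Δa) (q.1.1 + q.2 * Δt)‖₊ : ℝ≥0∞) ∂(ν.prod μτ)
      ≤ YT T f := by
    have hgm : AEMeasurable (fun y : ℝ × ℝ => (‖f y.1 y.2‖₊ : ℝ≥0∞))
        (Measure.map Φ (μτ.prod ν)) :=
      hfmeas.enorm.mono_ac hmap.absolutelyContinuous
    have e1 : ∫⁻ y, (‖f y.1 y.2‖₊ : ℝ≥0∞) ∂(Measure.map Φ (μτ.prod ν))
        = ∫⁻ u, (‖f (Φ u).1 (Φ u).2‖₊ : ℝ≥0∞) ∂(μτ.prod ν) :=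
      lintegral_map' hgm hΦmeas.aemeasurable
    have eswap : Measure.map (⇑(MeasurableEquiv.prodComm : (ℝ × ℝ) × ℝ ≃ᵐ ℝ × (ℝ × ℝ)))
        (ν.prod μτ) = μτ.prod ν := by
      rw [show ⇑(MeasurableEquiv.prodComm : (ℝ × ℝ) × ℝ ≃ᵐ ℝ × (ℝ × ℝ))
        = (Prod.swap : (ℝ × ℝ) × ℝ → ℝ × (ℝ × ℝ)) from rfl]
      exact Measure.prod_swap
    have e0 : ∫⁻ q, (‖f (q.1.2 + q.2 * Δa) (q.1.1 + q.2 * Δt)‖₊ : ℝ≥0∞) ∂(ν.prod μτ)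
        = ∫⁻ u, (‖f (Φ u).1 (Φ u).2‖₊ : ℝ≥0∞) ∂(μτ.prod ν) := by
      rw [← eswap]
      exact ((MeasurableEquiv.prodComm :
        (ℝ × ℝ) × ℝ ≃ᵐ ℝ × (ℝ × ℝ)).measurableEmbedding.lintegral_map
        (fun u => (‖f (Φ u).1 (Φ u).2‖₊ : ℝ≥0∞))).symm
    rw [e0, ← e1]
    calc ∫⁻ y, (‖f y.1 y.2‖₊ : ℝ≥0∞) ∂(Measure.map Φ (μτ.prod ν))
        ≤ ∫⁻ y, (‖f y.1 y.2‖₊ : ℝ≥0∞) ∂ν2 := lintegral_mono' hmap le_rfl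
      _ = YT T f := by rw [YT]; exact lintegral_prod_symm _ hfmeas.enorm
  have hfin : ∀ᵐ p ∂ν, ∫⁻ τ, (‖f (p.2 + τ * Δa) (p.1 + τ * Δt)‖₊ : ℝ≥0∞) ∂μτ < ⊤ := by
    refine ae_lt_top' (aem_lintegral_right hG.enorm) ?_
    rw [← lintegral_prod (fun q : (ℝ × ℝ) × ℝ => (‖f (q.1.2 + q.2 * Δa) (q.1.1 + q.2 * Δt)‖₊ : ℝ≥0∞)) hG.enorm]
    exact (lt_of_le_of_lt hGint (lt_top_iff_ne_top.2 hYf)).ne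
  have hint : ∀ᵐ p ∂ν, Integrable (fun τ => f (p.2 + τ * Δa) (p.1 + τ * Δt)) μτ := by
    filter_upwards [hG.prodMk_left, hfin] with p h1 h2
    exact ⟨h1, h2⟩
  -- pointwise estimate via Jensen/triangle for the Bochner integral
  have hptw : ∀ᵐ p ∂ν,
      (‖f (p.2 + Δa) (p.1 + Δt) - ∫ τ, f (p.2 + τ * Δa) (p.1 + τ * Δt) ∂μτ‖₊ : ℝ≥0∞)
        ≤ ∫⁻ τ, (‖f (p.2 + Δa) (p.1 + Δt) - f (p.2 + τ * Δa) (p.1 + τ * Δt)‖₊ : ℝ≥0∞) ∂μτ := by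
    filter_upwards [hint] with p hp
    have hconst : Integrable (fun _ : ℝ => f (p.2 + Δa) (p.1 + Δt)) μτ := integrable_const _
    have hxint : ∫ _, f (p.2 + Δa) (p.1 + Δt) ∂μτ = f (p.2 + Δa) (p.1 + Δt) := by
      rw [integral_const, measureReal_def, hμτuniv]
      simp
    have hsplit : f (p.2 + Δa) (p.1 + Δt) - ∫ τ, f (p.2 + τ * Δa) (p.1 + τ * Δt) ∂μτ
        = ∫ τ, (f (p.2 + Δa) (p.1 + Δt) - f (p.2 + τ * Δa) (p.1 + τ * Δt)) ∂μτ := by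
      rw [integral_sub hconst hp, hxint]
    rw [hsplit]
    exact enorm_integral_le_lintegral_enorm _
  -- the main estimate with a margin L
  have main : ∀ L : ℝ≥0∞, (∃ δ : ℝ, 0 < δ ∧ ∀ σ ∈ Set.Ioo (0:ℝ) δ,
      YT T (Da σ f) + YT (T - σ) (Dt σ f) ≤ L) →
      (∫⁻ t, (∫⁻ a, (‖f (a + Δa) (t + Δt)
          - ∫ τ in (0:ℝ)..1, f (a + τ * Δa) (t + τ * Δt)‖₊ : ℝ≥0∞) ∂μA) ∂μt')
        ≤ ENNReal.ofReal (Δa + Δt) * L := by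
    rintro L ⟨δ, hδ, hLb⟩
    have hLa : ∀ σ ∈ Set.Ioo (0:ℝ) δ, YT T (Da σ f) ≤ L :=
      fun σ hσ => le_trans le_self_add (hLb σ hσ)
    have hLt : ∀ σ ∈ Set.Ioo (0:ℝ) δ, YT (T - σ) (Dt σ f) ≤ L :=
      fun σ hσ => le_trans le_add_self (hLb σ hσ)
    have hiv : ∀ t a : ℝ, (∫ τ in (0:ℝ)..1, f (a + τ * Δa) (t + τ * Δt))
        = ∫ τ, f (a + τ * Δa) (t + τ * Δt) ∂μτ := by
      intro t a
      rw [intervalIntegral.integral_of_le zero_le_one]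
    calc ∫⁻ t, (∫⁻ a, (‖f (a + Δa) (t + Δt)
            - ∫ τ in (0:ℝ)..1, f (a + τ * Δa) (t + τ * Δt)‖₊ : ℝ≥0∞) ∂μA) ∂μt'
        = ∫⁻ t, (∫⁻ a, (‖f (a + Δa) (t + Δt)
            - ∫ τ, f (a + τ * Δa) (t + τ * Δt) ∂μτ‖₊ : ℝ≥0∞) ∂μA) ∂μt' := by
          exact lintegral_congr fun t => lintegral_congr fun a => by rw [hiv t a]
      _ = ∫⁻ p, (‖f (p.2 + Δa) (p.1 + Δt)
            - ∫ τ, f (p.2 + τ * Δa) (p.1 + τ * Δt) ∂μτ‖₊ : ℝ≥0∞) ∂ν := by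
          exact (lintegral_prod (fun p : ℝ × ℝ => (‖f (p.2 + Δa) (p.1 + Δt)
            - ∫ τ, f (p.2 + τ * Δa) (p.1 + τ * Δt) ∂μτ‖₊ : ℝ≥0∞))
            (hXν.sub hG.integral_prod_right').enorm).symm
      _ ≤ ∫⁻ p, (∫⁻ τ, (‖f (p.2 + Δa) (p.1 + Δt)
            - f (p.2 + τ * Δa) (p.1 + τ * Δt)‖₊ : ℝ≥0∞) ∂μτ) ∂ν :=
          lintegral_mono_ae hptw
      _ = ∫⁻ q, (‖f (q.1.2 + Δa) (q.1.1 + Δt)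
            - f (q.1.2 + q.2 * Δa) (q.1.1 + q.2 * Δt)‖₊ : ℝ≥0∞) ∂(ν.prod μτ) :=
          (lintegral_prod _ hH).symm
      _ = ∫⁻ τ, (∫⁻ p, (‖f (p.2 + Δa) (p.1 + Δt)
            - f (p.2 + τ * Δa) (p.1 + τ * Δt)‖₊ : ℝ≥0∞) ∂ν) ∂μτ :=
          lintegral_prod_symm _ hH
      _ ≤ ∫⁻ _, (ENNReal.ofReal Δa * L + ENNReal.ofReal Δt * L) ∂μτ := by
          refine lintegral_mono_ae ?_
          rw [hμτdef]
          filter_upwards [ae_restrict_mem measurableSet_Ioc] with τ hτ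
          have hτ0 : (0:ℝ) ≤ τ := hτ.1.le
          have hτ1 : τ ≤ 1 := hτ.2
          have hMν : AEStronglyMeasurable
              (fun p : ℝ × ℝ => f (p.2 + τ * Δa) (p.1 + Δt)) ν := by
            refine aesm_swap T f hfmeas _ _ measurableSet_Ioo measurableSet_Ioi (τ * Δa) Δt
              (fun x hx => add_pos_of_pos_of_nonneg hx (mul_nonneg hτ0 hΔa.le))
              (fun x hx => ⟨add_pos_of_pos_of_nonneg hx.1 hΔt.le, by
                have := hx.2; linarith⟩)
          have tri : ∀ p : ℝ × ℝ,
              (‖f (p.2 + Δa) (p.1 + Δt) - f (p.2 + τ * Δa) (p.1 + τ * Δt)‖₊ : ℝ≥0∞)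
              ≤ (‖f (p.2 + Δa) (p.1 + Δt) - f (p.2 + τ * Δa) (p.1 + Δt)‖₊ : ℝ≥0∞)
                + (‖f (p.2 + τ * Δa) (p.1 + Δt) - f (p.2 + τ * Δa) (p.1 + τ * Δt)‖₊ : ℝ≥0∞) := by
            intro p
            rw [show f (p.2 + Δa) (p.1 + Δt) - f (p.2 + τ * Δa) (p.1 + τ * Δt)
              = (f (p.2 + Δa) (p.1 + Δt) - f (p.2 + τ * Δa) (p.1 + Δt))
                + (f (p.2 + τ * Δa) (p.1 + Δt) - f (p.2 + τ * Δa) (p.1 + τ * Δt)) from by abel,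
              ← ENNReal.coe_add]
            exact ENNReal.coe_le_coe.2 (nnnorm_add_le _ _)
          have t1 : ∫⁻ p, (‖f (p.2 + Δa) (p.1 + Δt)
              - f (p.2 + τ * Δa) (p.1 + Δt)‖₊ : ℝ≥0∞) ∂ν ≤ ENNReal.ofReal Δa * L := by
            have e : ∫⁻ p, (‖f (p.2 + Δa) (p.1 + Δt)
                - f (p.2 + τ * Δa) (p.1 + Δt)‖₊ : ℝ≥0∞) ∂ν
                = ∫⁻ p, (‖f (p.2 + τ * Δa + (1 - τ) * Δa) (p.1 + Δt)
                - f (p.2 + τ * Δa) (p.1 + Δt)‖₊ : ℝ≥0∞) ∂ν :=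
              lintegral_congr fun p => by
                rw [show p.2 + τ * Δa + (1 - τ) * Δa = p.2 + Δa from by ring]
            rw [e]
            refine le_trans (shiftA T Δt f hfmeas L δ hδ hLa (τ * Δa) ((1 - τ) * Δa) Δt
              (mul_nonneg hτ0 hΔa.le) (mul_nonneg (by linarith) hΔa.le) hΔt.le
              (by linarith)) ?_
            refine mul_le_mul_left (ENNReal.ofReal_le_ofReal ?_) L
            nlinarith [mul_nonneg hτ0 hΔa.le]
          have t2 : ∫⁻ p, (‖f (p.2 + τ * Δa) (p.1 + Δt)
              - f (p.2 + τ * Δa) (p.1 + τ * Δt)‖₊ : ℝ≥0∞) ∂ν ≤ ENNReal.ofReal Δt * L := by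
            have e : ∫⁻ p, (‖f (p.2 + τ * Δa) (p.1 + Δt)
                - f (p.2 + τ * Δa) (p.1 + τ * Δt)‖₊ : ℝ≥0∞) ∂ν
                = ∫⁻ p, (‖f (p.2 + τ * Δa) (p.1 + (τ * Δt + (1 - τ) * Δt))
                - f (p.2 + τ * Δa) (p.1 + τ * Δt)‖₊ : ℝ≥0∞) ∂ν :=
              lintegral_congr fun p => by
                rw [show p.1 + (τ * Δt + (1 - τ) * Δt) = p.1 + Δt from by ring]
            rw [e]
            refine le_trans (shiftT T Δt f hfmeas L δ hδ hLt (τ * Δa) (τ * Δt) ((1 - τ) * Δt)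
              (mul_nonneg hτ0 hΔa.le) (mul_nonneg hτ0 hΔt.le)
              (mul_nonneg (by linarith) hΔt.le) (by nlinarith)) ?_
            refine mul_le_mul_left (ENNReal.ofReal_le_ofReal ?_) L
            nlinarith [mul_nonneg hτ0 hΔt.le]
          calc ∫⁻ p, (‖f (p.2 + Δa) (p.1 + Δt)
                - f (p.2 + τ * Δa) (p.1 + τ * Δt)‖₊ : ℝ≥0∞) ∂ν
              ≤ ∫⁻ p, ((‖f (p.2 + Δa) (p.1 + Δt) - f (p.2 + τ * Δa) (p.1 + Δt)‖₊ : ℝ≥0∞)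
                + (‖f (p.2 + τ * Δa) (p.1 + Δt)
                  - f (p.2 + τ * Δa) (p.1 + τ * Δt)‖₊ : ℝ≥0∞)) ∂ν := lintegral_mono tri
            _ = ∫⁻ p, (‖f (p.2 + Δa) (p.1 + Δt) - f (p.2 + τ * Δa) (p.1 + Δt)‖₊ : ℝ≥0∞) ∂ν
                + ∫⁻ p, (‖f (p.2 + τ * Δa) (p.1 + Δt)
                  - f (p.2 + τ * Δa) (p.1 + τ * Δt)‖₊ : ℝ≥0∞) ∂ν :=
                lintegral_add_left' ((hXν.sub hMν).enorm) _
            _ ≤ ENNReal.ofReal Δa * L + ENNReal.ofReal Δt * L := add_le_add t1 t2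
      _ = ENNReal.ofReal (Δa + Δt) * L := by
          rw [lintegral_const, hμτuniv, mul_one, ← add_mul,
            ← ENNReal.ofReal_add hΔa.le hΔt.le]
  -- close with ε of room
  refine ENNReal.le_of_forall_pos_le_add fun ε hε hlt => ?_
  have hbase : (0:ℝ≥0∞) < ENNReal.ofReal (Δa + Δt) := by
    rw [ENNReal.ofReal_pos]; linarith
  set ε' : ℝ≥0∞ := (ε : ℝ≥0∞) / ENNReal.ofReal (Δa + Δt) with hε'def
  have hε'pos : ε' ≠ 0 := (ENNReal.div_pos (by exact_mod_cast hε.ne') ofReal_ne_top).ne'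
  have hVL : V < V + ε' := ENNReal.lt_add_right hVne hε'pos
  have hev : ∀ᶠ σ in nhdsWithin 0 (Set.Ioi 0),
      YT T (Da σ f) + YT (T - σ) (Dt σ f) < V + ε' := by
    refine Filter.eventually_lt_of_limsup_lt ?_
    rw [← hVdef]; exact hVL
  obtain ⟨u, hu, hsub⟩ := mem_nhdsGT_iff_exists_Ioo_subset.1 hev
  refine le_trans (main (V + ε') ⟨u, hu, fun σ hσ => (hsub hσ).le⟩) ?_
  rw [mul_add, hε'def, ENNReal.mul_div_cancel hbase.ne' ofReal_ne_top]



/-- (Lemma `lem.err.bv`.) For `f ∈ U_T` and steps `Δa > 0`,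
`0 < Δt < T`,
`∫₀^{T−Δt} ∫₀^∞ ‖f(a+Δa,t+Δt) − ∫₀¹ f(a+τΔa,t+τΔt) dτ‖_{L^∞(Ω)} da dt
  ≤ (Δa+Δt)·‖f‖_{U_T}`. -/
theorem stmt6
    (T : ℝ) (hT : 0 < T) (f : ℝ → ℝ → Linf)
    (hfmeas : AEStronglyMeasurable (fun p : ℝ × ℝ => f p.1 p.2)
      ((volume.restrict (Set.Ioi (0:ℝ))).prod (volume.restrict (Set.Ioo (0:ℝ) T))))
    (hf : UTnorm T f ≠ ⊤)
    (Δa Δt : ℝ) (hΔa : 0 < Δa) (hΔt : 0 < Δt) (hΔtT : Δt < T) :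
    (∫⁻ t in Set.Ioo (0:ℝ) (T - Δt), ∫⁻ a in Set.Ioi (0:ℝ),
        (‖f (a + Δa) (t + Δt) - ∫ τ in (0:ℝ)..1, f (a + τ * Δa) (t + τ * Δt)‖₊ : ℝ≥0∞))
      ≤ ENNReal.ofReal (Δa + Δt) * UTnorm T f := by
  have hf' := hf
  rw [UTnorm] at hf'
  obtain ⟨hYf, hVne⟩ := ENNReal.add_ne_top.1 hf'
  refine le_trans (stmt6' T hT f hfmeas hYf _ rfl hVne Δa Δt hΔa hΔt hΔtT) ?_
  rw [UTnorm]
  exact mul_le_mul_right le_add_self _
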